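/- Let K be a nonzero bounded linear operator on H with closed range R(K). Let Λ = (Λ_i)_{i∈I} be a Bessel g-sequence with frame operator S_Λ such that S_Λ(R(K)) ⊆ R(K), and suppose there exists a Bessel g-sequence Γ = (Γ_i)_{i∈I} with Bessel bound D > 0 such that g = ∑_{i∈I} Λ_i* (Γ_i g) for every g ∈ R(K). Then Λ is a K-g-frame for H; in fact D⁻¹‖K‖⁻² ‖K* f‖² ≤ ∑_{i∈I} ‖Λ_i f‖² for every f ∈ H. -/

import Mathlib

open ContinuousLinearMap

noncomputable section

variable {I : Type*} {H : Type*} [NormedAddCommGroup H] [InnerProductSpace ℂ H] [CompleteSpace H]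
  {G : I → Type*} [∀ i, NormedAddCommGroup (G i)] [∀ i, InnerProductSpace ℂ (G i)]
  [∀ i, CompleteSpace (G i)]

/-- `Λ` is a Bessel g-sequence: for some `B > 0`, `∑ᵢ ‖Λᵢ f‖² ≤ B ‖f‖²` for all `f`. -/
def IsGBessel (Λ : ∀ i, H →L[ℂ] G i) : Prop :=
  ∃ B : ℝ, 0 < B ∧ ∀ f : H,
    Summable (fun i => ‖Λ i f‖ ^ 2) ∧ (∑' i, ‖Λ i f‖ ^ 2) ≤ B * ‖f‖ ^ 2

/-- `Λ` is a `K`-g-frame: for some `A, B > 0`,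
`A ‖K* f‖² ≤ ∑ᵢ ‖Λᵢ f‖² ≤ B ‖f‖²` for all `f`. -/
def IsKgFrame (K : H →L[ℂ] H) (Λ : ∀ i, H →L[ℂ] G i) : Prop :=
  ∃ A B : ℝ, 0 < A ∧ 0 < B ∧ ∀ f : H,
    Summable (fun i => ‖Λ i f‖ ^ 2) ∧
    A * ‖ContinuousLinearMap.adjoint K f‖ ^ 2 ≤ (∑' i, ‖Λ i f‖ ^ 2) ∧
    (∑' i, ‖Λ i f‖ ^ 2) ≤ B * ‖f‖ ^ 2

/-- `T : (⊕ᵢ Hᵢ)_{ℓ²} → H` is the synthesis operator of `Λ`, characterized by its adjoint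
(the analysis operator) satisfying `(T* f)ᵢ = Λᵢ f` for all `f`. -/
def IsSynthesis (Λ : ∀ i, H →L[ℂ] G i) (T : lp G 2 →L[ℂ] H) : Prop :=
  ∀ (f : H) (i : I), (ContinuousLinearMap.adjoint T f : ∀ i, G i) i = Λ i f

/-- `Γ` is a `K`-dual (Bessel g-sequence) of `Λ`: `K f = ∑ᵢ Λᵢ* (Γᵢ f)` for all `f`,
the sum converging in `H`. -/
def IsKDual (K : H →L[ℂ] H) (Λ Γ : ∀ i, H →L[ℂ] G i) : Prop :=
  ∀ f : H, HasSum (fun i => ContinuousLinearMap.adjoint (Λ i) (Γ i f)) (K f)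

lemma cs_tsum {ι : Type*} (a b : ι → ℝ) (ha : ∀ i, 0 ≤ a i) (hb : ∀ i, 0 ≤ b i)
    (hsa : Summable fun i => a i ^ 2) (hsb : Summable fun i => b i ^ 2) :
    Summable (fun i => a i * b i) ∧
      ∑' i, a i * b i ≤ Real.sqrt (∑' i, a i ^ 2) * Real.sqrt (∑' i, b i ^ 2) := by
  have hab : ∀ i, a i * b i ≤ (a i ^ 2 + b i ^ 2) / 2 := fun i => by
    nlinarith [sq_nonneg (a i - b i)]
  have hsum : Summable (fun i => a i * b i) :=
    Summable.of_nonneg_of_le (fun i => mul_nonneg (ha i) (hb i)) hab ((hsa.add hsb).div_const 2)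
  refine ⟨hsum, Summable.tsum_le_of_sum_le hsum fun s => ?_⟩
  have h1 : (∑ i ∈ s, a i * b i) ^ 2 ≤ (∑ i ∈ s, a i ^ 2) * ∑ i ∈ s, b i ^ 2 :=
    Finset.sum_mul_sq_le_sq_mul_sq s a b
  calc ∑ i ∈ s, a i * b i ≤ Real.sqrt ((∑ i ∈ s, a i * b i) ^ 2) := by
        rw [Real.sqrt_sq_eq_abs]; exact le_abs_self _
    _ ≤ Real.sqrt ((∑ i ∈ s, a i ^ 2) * ∑ i ∈ s, b i ^ 2) := Real.sqrt_le_sqrt h1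
    _ = Real.sqrt (∑ i ∈ s, a i ^ 2) * Real.sqrt (∑ i ∈ s, b i ^ 2) :=
        Real.sqrt_mul (Finset.sum_nonneg fun i _ => sq_nonneg _) _
    _ ≤ Real.sqrt (∑' i, a i ^ 2) * Real.sqrt (∑' i, b i ^ 2) := by
        gcongr <;> first
        | exact Real.sqrt_nonneg _
        | exact Summable.sum_le_tsum s (fun i _ => sq_nonneg _) hsa
        | exact Summable.sum_le_tsum s (fun i _ => sq_nonneg _) hsb

/-- if `K ≠ 0` has closed range, `Λ` is Bessel with frame operator `S`
satisfying `S(R(K)) ⊆ R(K)`, and a Bessel g-sequence `Γ` with bound `D` reproduces every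
`g ∈ R(K)` as `g = ∑ᵢ Λᵢ* (Γᵢ g)`, then `Λ` is a `K`-g-frame; in fact
`D⁻¹ ‖K‖⁻² ‖K* f‖² ≤ ∑ᵢ ‖Λᵢ f‖²` for all `f`. -/
theorem isKgFrame_of_dual_on_range
    (K : H →L[ℂ] H) (hK : K ≠ 0) (hclosed : IsClosed (Set.range K))
    (Λ Γ : ∀ i, H →L[ℂ] G i) (hΛ : IsGBessel Λ)
    (S : H →L[ℂ] H)
    (hS : ∀ f : H, HasSum (fun i => ContinuousLinearMap.adjoint (Λ i) (Λ i f)) (S f))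
    (hSrange : ∀ f ∈ Set.range K, S f ∈ Set.range K)
    (D : ℝ) (hD : 0 < D)
    (hΓ : ∀ f : H, Summable (fun i => ‖Γ i f‖ ^ 2) ∧ (∑' i, ‖Γ i f‖ ^ 2) ≤ D * ‖f‖ ^ 2)
    (hdual : ∀ g ∈ Set.range K,
      HasSum (fun i => ContinuousLinearMap.adjoint (Λ i) (Γ i g)) g) :
    IsKgFrame K Λ ∧ ∀ f : H,
      D⁻¹ * (‖K‖ ^ 2)⁻¹ * ‖ContinuousLinearMap.adjoint K f‖ ^ 2 ≤ ∑' i, ‖Λ i f‖ ^ 2 := by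
  obtain ⟨B, hB, hΛB⟩ := hΛ
  have hKnorm : (0 : ℝ) < ‖K‖ := norm_pos_iff.mpr hK
  have key : ∀ f : H,
      D⁻¹ * (‖K‖ ^ 2)⁻¹ * ‖ContinuousLinearMap.adjoint K f‖ ^ 2 ≤ ∑' i, ‖Λ i f‖ ^ 2 := by
    intro f
    set g := K (ContinuousLinearMap.adjoint K f) with hgdef
    have hsum := hdual g ⟨_, rfl⟩
    have hinner : HasSum (fun i =>
        (inner ℂ f (ContinuousLinearMap.adjoint (Λ i) (Γ i g)) : ℂ)) (inner ℂ f g) := by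
      simpa using hsum.mapL (innerSL ℂ f)
    have hinner' : HasSum (fun i => (inner ℂ (Λ i f) (Γ i g) : ℂ)) (inner ℂ f g) := by
      simpa only [adjoint_inner_right] using hinner
    have hfg : (inner ℂ f g : ℂ) = (‖ContinuousLinearMap.adjoint K f‖ : ℂ) ^ 2 := by
      rw [hgdef, ← adjoint_inner_left K (ContinuousLinearMap.adjoint K f) f,
        inner_self_eq_norm_sq_to_K]
      norm_cast
    have hLs := (hΛB f).1
    have hΓs := (hΓ g).1
    obtain ⟨habs, hcs⟩ := cs_tsum (fun i => ‖Λ i f‖) (fun i => ‖Γ i g‖)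
      (fun i => norm_nonneg _) (fun i => norm_nonneg _) hLs hΓs
    have hnormsum : Summable (fun i => ‖(inner ℂ (Λ i f) (Γ i g) : ℂ)‖) :=
      Summable.of_nonneg_of_le (fun i => norm_nonneg _)
        (fun i => norm_inner_le_norm _ _) habs
    set N := ‖ContinuousLinearMap.adjoint K f‖ ^ 2 with hN
    set L := ∑' i, ‖Λ i f‖ ^ 2 with hL
    have hLnn : 0 ≤ L := tsum_nonneg fun i => sq_nonneg _
    have h2 : N ≤ ∑' i, ‖Λ i f‖ * ‖Γ i g‖ := by
      calc N = ‖(inner ℂ f g : ℂ)‖ := by rw [hfg]; simp [hN]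
        _ = ‖∑' i, (inner ℂ (Λ i f) (Γ i g) : ℂ)‖ := by rw [hinner'.tsum_eq]
        _ ≤ ∑' i, ‖(inner ℂ (Λ i f) (Γ i g) : ℂ)‖ := norm_tsum_le_tsum_norm hnormsum
        _ ≤ ∑' i, ‖Λ i f‖ * ‖Γ i g‖ :=
            Summable.tsum_le_tsum (fun i => norm_inner_le_norm _ _) hnormsum habs
    have hgnorm : ‖g‖ ≤ ‖K‖ * ‖ContinuousLinearMap.adjoint K f‖ := K.le_opNorm _
    set M := D * ‖K‖ ^ 2 with hM
    have hMpos : 0 < M := by positivity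
    have hΓbound : ∑' i, ‖Γ i g‖ ^ 2 ≤ M * N := by
      refine le_trans (hΓ g).2 ?_
      have h4 : ‖g‖ ^ 2 ≤ ‖K‖ ^ 2 * N := by
        rw [hN]
        nlinarith [norm_nonneg g, norm_nonneg (ContinuousLinearMap.adjoint K f)]
      rw [hM]; nlinarith
    have h3 : N ≤ Real.sqrt L * Real.sqrt (M * N) := by
      refine le_trans h2 (le_trans hcs ?_)
      exact mul_le_mul_of_nonneg_left (Real.sqrt_le_sqrt hΓbound) (Real.sqrt_nonneg _)
    have hNnn : 0 ≤ N := sq_nonneg _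
    have hfin : N ≤ M * L := by
      rcases hNnn.eq_or_lt with h | hNpos
      · rw [← h]; positivity
      · have hs1 : Real.sqrt L ^ 2 = L := Real.sq_sqrt hLnn
        have hs2 : Real.sqrt (M * N) ^ 2 = M * N :=
          Real.sq_sqrt (le_of_lt (mul_pos hMpos hNpos))
        have h5 : N ^ 2 ≤ L * (M * N) := by
          nlinarith [Real.sqrt_nonneg L, Real.sqrt_nonneg (M * N)]
        nlinarith
    have heq : D⁻¹ * (‖K‖ ^ 2)⁻¹ * N = N / M := by
      rw [hM]; field_simp
    rw [heq, div_le_iff₀ hMpos, mul_comm L M]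
    exact hfin
  exact ⟨⟨D⁻¹ * (‖K‖ ^ 2)⁻¹, B, by positivity, hB,
    fun f => ⟨(hΛB f).1, key f, (hΛB f).2⟩⟩, key⟩
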